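/- With Z and N as above, for Re(s) > 1 one has Z'(s)/Z(s) = ∑_{γ∈E} (log N(γ₀(γ)) / (1 - N(γ)^{-1})) · N(γ)^{-s}, where E = {(γ₀, n) : γ₀ ∈ P, n ∈ ℕ, n ≥ 1}, N((γ₀,n)) = N(γ₀)^n, and γ₀((γ₀,n)) = γ₀. -/

import Mathlib

open Complex

namespace SelbergAux

lemma tsum_pow_succ {x : ℝ} (h0 : 0 ≤ x) (h1 : x < 1) :
    ∑' k : ℕ, x ^ (k + 1) = x * (1 - x)⁻¹ := by
  simp_rw [pow_succ]
  rw [tsum_mul_right, tsum_geometric_of_lt_one h0 h1, mul_comm]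
lemma summable_pow_succ {x : ℝ} (h0 : 0 ≤ x) (h1 : x < 1) :
    Summable (fun k : ℕ => x ^ (k + 1)) := by
  simp_rw [pow_succ]; exact (summable_geometric_of_lt_one h0 h1).mul_right x
lemma rpow_neg_nat {b : ℝ} (hb : 0 < b) (k : ℕ) :
    b ^ (-(k:ℝ)) = (b⁻¹) ^ k := by
  rw [Real.rpow_neg hb.le, Real.rpow_natCast, inv_pow]
lemma rpow_neg_add_nat {b : ℝ} (hb : 0 < b) (c : ℝ) (k : ℕ) :
    b ^ (-(c + (k:ℝ))) = b ^ (-c) * (b⁻¹) ^ k := by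
  rw [neg_add, Real.rpow_add hb, rpow_neg_nat hb]
lemma rpow_neg_nat_mul {b : ℝ} (hb : 0 < b) (c : ℝ) (m : ℕ) :
    b ^ (-(((m:ℝ) + 1) * c)) = (b ^ (-c)) ^ (m + 1) := by
  rw [show -(((m:ℝ)+1)*c) = (-c) * ((m:ℝ)+1) by ring, Real.rpow_mul hb.le,
    show ((m:ℝ)+1) = ((m+1 : ℕ):ℝ) by push_cast; ring, Real.rpow_natCast]
lemma rpow_inv_nat {b : ℝ} (hb : 0 < b) (m : ℕ) :
    (b⁻¹) ^ (m + 1) = b ^ (-((m:ℝ) + 1)) := by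
  rw [← rpow_neg_nat hb]; norm_num
lemma one_sub_rpow_lower {b : ℝ} (hb : 1 < b) {c : ℝ} (hc : 0 < c) :
    c * Real.log b * b ^ (-c) ≤ 1 - b ^ (-c) := by
  have hb0 : (0:ℝ) < b := by linarith
  have hbt : b ^ (-c) = Real.exp (-(c * Real.log b)) := by
    rw [Real.rpow_def_of_pos hb0]; ring_nf
  rw [hbt]
  have h1 := Real.add_one_le_exp (c * Real.log b)
  have h2 : Real.exp (-(c * Real.log b)) * Real.exp (c * Real.log b) = 1 := by
    rw [← Real.exp_add]; simp
  nlinarith [Real.exp_pos (-(c * Real.log b))]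
lemma one_sub_rpow_upper {b : ℝ} (hb : 1 < b) (c : ℝ) :
    1 - b ^ (-c) ≤ c * Real.log b := by
  have h1 := Real.add_one_le_exp (-(c * Real.log b))
  have hbt : b ^ (-c) = Real.exp (-(c * Real.log b)) := by
    rw [Real.rpow_def_of_pos (by linarith)]; ring_nf
  rw [hbt]; linarith
lemma log_le_rpow_div {b ε : ℝ} (hb : 1 ≤ b) (hε : 0 < ε) :
    Real.log b ≤ b ^ ε / ε := by
  have hx := Real.log_le_sub_one_of_pos (x := b ^ ε) (by positivity)
  rw [Real.log_rpow (by linarith)] at hx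
  rw [le_div_iff₀ hε]
  nlinarith [Real.log_nonneg hb]
lemma neg_log_one_sub_nonneg {x : ℝ} (h0 : 0 ≤ x) (h1 : x < 1) :
    0 ≤ -Real.log (1 - x) := by
  have := Real.log_nonpos (by linarith) (by linarith : (1:ℝ) - x ≤ 1); linarith
lemma neg_log_one_sub_le {x : ℝ} (h0 : 0 ≤ x) (h1 : x < 1) :
    -Real.log (1 - x) ≤ x * (1 - x)⁻¹ := by
  have hx : 0 < 1 - x := by linarith
  have h := Real.log_le_sub_one_of_pos (inv_pos.mpr hx)
  rw [Real.log_inv] at h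
  have he : (1 - x)⁻¹ - 1 = x * (1 - x)⁻¹ := by field_simp; ring
  linarith [he ▸ h]
lemma summable_inv_sq : Summable (fun m : ℕ => (((m : ℝ) + 1)⁻¹) ^ 2) := by
  have h : Summable (fun n : ℕ => 1 / (n : ℝ) ^ 2) := by
    exact_mod_cast Real.summable_one_div_nat_pow.mpr (by norm_num)
  have h2 := (summable_nat_add_iff 1).mpr h
  refine h2.congr fun n => ?_
  push_cast; rw [one_div, inv_pow]

section Master
variable {P : Type*} {N : P → ℝ}

lemma c_summable (hN : ∀ p, 1 < N p) {σ₂ : ℝ} (h2 : 0 < σ₂)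
    (hs : Summable fun q : P × ℕ => N q.1 ^ (-((q.2:ℝ) + 1) * σ₂)) :
    Summable (fun p => N p ^ (-σ₂) * (1 - N p ^ (-σ₂))⁻¹) := by
  have hnn : 0 ≤ fun q : P × ℕ => N q.1 ^ (-((q.2:ℝ) + 1) * σ₂) :=
    fun q => (Real.rpow_pos_of_pos (by linarith [hN q.1]) _).le
  have h := ((summable_prod_of_nonneg hnn).mp hs).2
  refine h.congr fun p => ?_
  have hb := hN p
  have hb0 : (0:ℝ) < N p := by linarith
  have hx0 : 0 < N p ^ (-σ₂) := Real.rpow_pos_of_pos hb0 _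
  have hx1 : N p ^ (-σ₂) < 1 := Real.rpow_lt_one_of_one_lt_of_neg hb (by linarith)
  calc ∑' m : ℕ, N p ^ (-((m:ℝ)+1) * σ₂) = ∑' m : ℕ, (N p ^ (-σ₂)) ^ (m+1) := by
        refine tsum_congr fun m => ?_
        rw [neg_mul, rpow_neg_nat_mul hb0 σ₂ m]
    _ = N p ^ (-σ₂) * (1 - N p ^ (-σ₂))⁻¹ := tsum_pow_succ hx0.le hx1

end Master
end SelbergAux

namespace SelbergAux
section Master2
variable {P : Type*} {N : P → ℝ}

lemma c_lower_small {r σ₂ : ℝ} (hb : 1 < r) (hr2 : r ≤ 2) (h2 : 0 < σ₂) :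
    (2:ℝ)^(-σ₂) * (σ₂ * Real.log r)⁻¹ ≤ r ^ (-σ₂) * (1 - r ^ (-σ₂))⁻¹ := by
  have hL : 0 < Real.log r := Real.log_pos hb
  have hx1 : r ^ (-σ₂) < 1 := Real.rpow_lt_one_of_one_lt_of_neg hb (by linarith)
  have h1 : (2:ℝ)^(-σ₂) ≤ r^(-σ₂) := by
    rw [Real.rpow_neg (by norm_num : (0:ℝ) ≤ 2), Real.rpow_neg (by linarith : (0:ℝ) ≤ r)]
    exact inv_anti₀ (Real.rpow_pos_of_pos (by linarith) _)
      (Real.rpow_le_rpow (by linarith) hr2 h2.le)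
  have h2' : (σ₂ * Real.log r)⁻¹ ≤ (1 - r^(-σ₂))⁻¹ :=
    inv_anti₀ (by linarith) (one_sub_rpow_upper hb σ₂)
  exact mul_le_mul h1 h2' (by positivity) (by positivity)

lemma c_lower_one {r σ₂ : ℝ} (hb : 1 < r) (h2 : 0 < σ₂) :
    r^(-σ₂) ≤ r^(-σ₂) * (1 - r^(-σ₂))⁻¹ := by
  have hx1 : r ^ (-σ₂) < 1 := Real.rpow_lt_one_of_one_lt_of_neg hb (by linarith)
  have hx0 : 0 < r ^ (-σ₂) := Real.rpow_pos_of_pos (by linarith) _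
  have h3 : (0:ℝ) < 1 - r^(-σ₂) := by linarith
  have h4 : (1 - r^(-σ₂)) * (1 - r^(-σ₂))⁻¹ = 1 := mul_inv_cancel₀ (ne_of_gt h3)
  nlinarith [inv_pos.mpr h3]

lemma summable_neg_log (hN : ∀ p, 1 < N p) {σ₂ σ₀ : ℝ} (h2 : 1 < σ₂) (h20 : σ₂ < σ₀)
    (hs : Summable fun q : P × ℕ => N q.1 ^ (-((q.2:ℝ) + 1) * σ₂)) :
    Summable (fun q : P × ℕ => -Real.log (1 - N q.1 ^ (-(σ₀ + (q.2:ℝ))))) := by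
  have h0 : 1 < σ₀ := h2.trans h20
  set B := ∑' m:ℕ, (((m:ℝ)+1)⁻¹)^2 with hB
  have hBnn : 0 ≤ B := tsum_nonneg (fun m => by positivity)
  set C := B * σ₂ * (2:ℝ)^σ₂ + 4 with hC
  have hb0' : ∀ p, (0:ℝ) < N p := fun p => lt_trans one_pos (hN p)
  have hXpos : ∀ p (k:ℕ), 0 < N p ^ (-(σ₀+(k:ℝ))) := fun p k => Real.rpow_pos_of_pos (hb0' p) _
  have hXlt : ∀ p (k:ℕ), N p ^ (-(σ₀+(k:ℝ))) < 1 := fun p k =>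
    Real.rpow_lt_one_of_one_lt_of_neg (hN p)
      (by have := Nat.cast_nonneg (α := ℝ) k; linarith)
  have hXle : ∀ p (k:ℕ), N p ^ (-(σ₀+(k:ℝ))) ≤ N p ^ (-σ₀) := fun p k =>
    Real.rpow_le_rpow_of_exponent_le (le_of_lt (hN p))
      (by linarith [Nat.cast_nonneg (α := ℝ) k] : -(σ₀+(k:ℝ)) ≤ -σ₀)
  have hY0 : ∀ p, 0 < N p ^ (-σ₀) := fun p => Real.rpow_pos_of_pos (hb0' p) _
  have hY1 : ∀ p, N p ^ (-σ₀) < 1 := fun p =>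
    Real.rpow_lt_one_of_one_lt_of_neg (hN p) (by linarith)
  have hterm_nonneg : ∀ p (k:ℕ), 0 ≤ -Real.log (1 - N p ^ (-(σ₀+(k:ℝ)))) :=
    fun p k => neg_log_one_sub_nonneg (hXpos p k).le (hXlt p k)
  have hterm_le : ∀ p (k:ℕ), -Real.log (1 - N p ^ (-(σ₀+(k:ℝ))))
      ≤ (1 - N p^(-σ₀))⁻¹ * (N p^(-σ₀) * ((N p)⁻¹)^k) := by
    intro p k
    have h1 : -Real.log (1 - N p ^ (-(σ₀+(k:ℝ)))) ≤
        N p ^ (-(σ₀+(k:ℝ))) * (1 - N p ^ (-(σ₀+(k:ℝ))))⁻¹ :=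
      neg_log_one_sub_le (hXpos p k).le (hXlt p k)
    have h2'' : (1 - N p ^ (-(σ₀+(k:ℝ))))⁻¹ ≤ (1 - N p^(-σ₀))⁻¹ :=
      inv_anti₀ (by linarith [hY1 p]) (by linarith [hXle p k])
    calc -Real.log (1 - N p ^ (-(σ₀+(k:ℝ))))
        ≤ N p ^ (-(σ₀+(k:ℝ))) * (1 - N p ^ (-(σ₀+(k:ℝ))))⁻¹ := h1
      _ ≤ N p ^ (-(σ₀+(k:ℝ))) * (1 - N p^(-σ₀))⁻¹ :=
          mul_le_mul_of_nonneg_left h2'' (hXpos p k).le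
      _ = (1 - N p^(-σ₀))⁻¹ * (N p^(-σ₀) * ((N p)⁻¹)^k) := by
          rw [rpow_neg_add_nat (hb0' p)]; ring
  have hgeo : ∀ p, Summable (fun k:ℕ => (1 - N p^(-σ₀))⁻¹ * (N p^(-σ₀) * ((N p)⁻¹)^k)) := by
    intro p
    have hi0 : (0:ℝ) ≤ (N p)⁻¹ := inv_nonneg.mpr (hb0' p).le
    have hi1 : (N p)⁻¹ < 1 := inv_lt_one_of_one_lt₀ (hN p)
    exact ((summable_geometric_of_lt_one hi0 hi1).mul_left _).mul_left _
  have hpa : ∀ p, Summable (fun k:ℕ => -Real.log (1 - N p ^ (-(σ₀+(k:ℝ))))) :=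
    fun p => Summable.of_nonneg_of_le (hterm_nonneg p) (hterm_le p) (hgeo p)
  have hpb : ∀ p, ∑' k:ℕ, -Real.log (1 - N p ^ (-(σ₀+(k:ℝ))))
      ≤ C * (N p^(-σ₂) * (1 - N p^(-σ₂))⁻¹) := by
    intro p
    have hb : 1 < N p := hN p
    have hb0 : (0:ℝ) < N p := hb0' p
    have hx2pos : 0 < N p^(-σ₂) := Real.rpow_pos_of_pos (hb0' p) _
    have hx2lt : N p^(-σ₂) < 1 :=
      Real.rpow_lt_one_of_one_lt_of_neg hb (by linarith : -σ₂ < 0)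
    have hcp0 : 0 ≤ N p^(-σ₂) * (1 - N p^(-σ₂))⁻¹ :=
      mul_nonneg hx2pos.le (inv_nonneg.mpr (by linarith))
    rcases le_or_gt (N p) 2 with hr2 | hr2
    · -- small base: use the full double series with the 1/(m+1) factor
      have hL : 0 < Real.log (N p) := Real.log_pos hb
      set g : ℕ → ℕ → ℝ := fun k m => (N p ^ (-(σ₀+(k:ℝ))))^(m+1) * ((m:ℝ)+1)⁻¹ with hg
      have hgsum : ∀ k, HasSum (fun m => g k m) (-Real.log (1 - N p ^ (-(σ₀+(k:ℝ))))) := by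
        intro k
        have habs : |N p ^ (-(σ₀+(k:ℝ)))| < 1 := by
          rw [_root_.abs_of_nonneg (hXpos p k).le]; exact hXlt p k
        exact (Real.hasSum_pow_div_log_of_abs_lt_one habs).congr_fun
          (fun m => by rw [hg]; rw [div_eq_mul_inv])
      have hjoint : Summable (Function.uncurry g) := by
        refine (summable_prod_of_nonneg (fun t =>
          mul_nonneg (pow_nonneg (hXpos p t.1).le _) (by positivity))).mpr
          ⟨fun k => (hgsum k).summable, ?_⟩
        exact (hpa p).congr (fun k => ((hgsum k).tsum_eq).symm)
      have hswap : Summable (fun t : ℕ×ℕ => g t.2 t.1) :=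
        ((Equiv.prodComm ℕ ℕ).summable_iff (f := Function.uncurry g)).mpr hjoint
      have hmsum : Summable (fun m => ∑' k, g k m) :=
        ((summable_prod_of_nonneg (f := fun t : ℕ×ℕ => g t.2 t.1) (fun t =>
          mul_nonneg (pow_nonneg (hXpos p t.2).le _) (by positivity))).mp hswap).2
      have hm : ∀ m, ∑' k, g k m ≤ (((m:ℝ)+1)⁻¹)^2 * (Real.log (N p))⁻¹ := by
        intro m
        have hrew : ∀ k, g k m = ((N p^(-σ₀))^(m+1) * ((m:ℝ)+1)⁻¹) * (((N p)⁻¹^(m+1)))^k := by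
          intro k
          show (N p ^ (-(σ₀+(k:ℝ))))^(m+1) * ((m:ℝ)+1)⁻¹
            = ((N p^(-σ₀))^(m+1) * ((m:ℝ)+1)⁻¹) * (((N p)⁻¹^(m+1)))^k
          rw [rpow_neg_add_nat hb0, mul_pow, ← pow_mul, mul_comm k (m+1), pow_mul]
          ring
        have hi0 : (0:ℝ) ≤ (N p)⁻¹^(m+1) := by positivity
        have hi1 : (N p)⁻¹^(m+1) < 1 :=
          pow_lt_one₀ (by positivity) (inv_lt_one_of_one_lt₀ hb) (Nat.succ_ne_zero m)
        have hsum : ∑' k, g k m = ((N p^(-σ₀))^(m+1) * ((m:ℝ)+1)⁻¹) * (1 - (N p)⁻¹^(m+1))⁻¹ := by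
          rw [tsum_congr hrew, tsum_mul_left, tsum_geometric_of_lt_one hi0 hi1]
        rw [hsum]
        have hA := one_sub_rpow_lower hb (c := ((m:ℝ)+1)) (by positivity)
        have hAinv : (1 - (N p)⁻¹^(m+1))⁻¹ ≤ ((m:ℝ)+1)⁻¹ * (Real.log (N p))⁻¹ * N p^((m:ℝ)+1) := by
          rw [rpow_inv_nat hb0]
          have hApos : 0 < ((m:ℝ)+1) * Real.log (N p) * N p ^ (-((m:ℝ)+1)) := by
            have := Real.rpow_pos_of_pos hb0 (-((m:ℝ)+1)); positivity
          refine le_trans (inv_anti₀ hApos hA) (le_of_eq ?_)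
          rw [mul_inv, mul_inv, Real.rpow_neg hb0.le, inv_inv]
        have hprod : (N p^(-σ₀))^(m+1) * N p^((m:ℝ)+1) ≤ 1 := by
          rw [← rpow_neg_nat_mul hb0 σ₀ m, ← Real.rpow_add hb0]
          refine Real.rpow_le_one_of_one_le_of_nonpos hb.le ?_
          nlinarith [Nat.cast_nonneg (α := ℝ) m]
        calc (N p^(-σ₀))^(m+1) * ((m:ℝ)+1)⁻¹ * (1 - (N p)⁻¹^(m+1))⁻¹
            ≤ (N p^(-σ₀))^(m+1) * ((m:ℝ)+1)⁻¹ * (((m:ℝ)+1)⁻¹ * (Real.log (N p))⁻¹ * N p^((m:ℝ)+1)) := by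
              refine mul_le_mul_of_nonneg_left hAinv ?_
              have := hY0 p; positivity
          _ = ((N p^(-σ₀))^(m+1) * N p^((m:ℝ)+1)) * (((m:ℝ)+1)⁻¹ * ((m:ℝ)+1)⁻¹ * (Real.log (N p))⁻¹) := by ring
          _ ≤ 1 * (((m:ℝ)+1)⁻¹ * ((m:ℝ)+1)⁻¹ * (Real.log (N p))⁻¹) := by
              refine mul_le_mul_of_nonneg_right hprod ?_
              positivity
          _ = (((m:ℝ)+1)⁻¹)^2 * (Real.log (N p))⁻¹ := by ring
      have hcl := c_lower_small hb hr2 (by linarith : (0:ℝ) < σ₂)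
      calc ∑' k:ℕ, -Real.log (1 - N p ^ (-(σ₀+(k:ℝ))))
          = ∑' k:ℕ, ∑' m:ℕ, g k m := tsum_congr (fun k => ((hgsum k).tsum_eq).symm)
        _ = ∑' m:ℕ, ∑' k:ℕ, g k m := (Summable.tsum_comm hjoint).symm
        _ ≤ ∑' m:ℕ, (((m:ℝ)+1)⁻¹)^2 * (Real.log (N p))⁻¹ :=
            Summable.tsum_le_tsum hm hmsum (summable_inv_sq.mul_right _)
        _ = B * (Real.log (N p))⁻¹ := by rw [tsum_mul_right]
        _ = (B * σ₂ * (2:ℝ)^σ₂) * ((2:ℝ)^(-σ₂) * (σ₂ * Real.log (N p))⁻¹) := by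
            rw [Real.rpow_neg (by norm_num : (0:ℝ) ≤ 2), mul_inv]
            have h2pos : (0:ℝ) < (2:ℝ)^σ₂ := Real.rpow_pos_of_pos (by norm_num) _
            have hσne : σ₂ ≠ 0 := by linarith
            have hLne : Real.log (N p) ≠ 0 := ne_of_gt hL
            have h2ne : ((2:ℝ)^σ₂) ≠ 0 := ne_of_gt h2pos
            field_simp
        _ ≤ (B * σ₂ * (2:ℝ)^σ₂) * (N p^(-σ₂) * (1 - N p^(-σ₂))⁻¹) := by
            refine mul_le_mul_of_nonneg_left hcl ?_
            have h2pos : (0:ℝ) < (2:ℝ)^σ₂ := Real.rpow_pos_of_pos (by norm_num) _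
            positivity
        _ ≤ C * (N p^(-σ₂) * (1 - N p^(-σ₂))⁻¹) := by
            refine mul_le_mul_of_nonneg_right ?_ hcp0
            rw [hC]; linarith
    · -- large base
      have hgeosum : ∑' k:ℕ, (1 - N p^(-σ₀))⁻¹ * (N p^(-σ₀) * ((N p)⁻¹)^k)
          = (1 - N p^(-σ₀))⁻¹ * (N p^(-σ₀) * (1 - (N p)⁻¹)⁻¹) := by
        rw [tsum_mul_left, tsum_mul_left, tsum_geometric_of_lt_one (by positivity)
          (inv_lt_one_of_one_lt₀ hb)]
      have hinv2 : (N p)⁻¹ ≤ 1/2 := by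
        have h := inv_anti₀ (by norm_num : (0:ℝ) < 2) hr2.le
        simpa using h
      have hs0 : N p^(-σ₀) ≤ (N p)⁻¹ := by
        rw [← Real.rpow_neg_one (N p)]
        exact Real.rpow_le_rpow_of_exponent_le hb.le (by linarith)
      have hs2 : N p^(-σ₀) ≤ N p^(-σ₂) := Real.rpow_le_rpow_of_exponent_le hb.le (by linarith)
      have hb1 : (1 - (N p)⁻¹)⁻¹ ≤ 2 := by
        have : ((1:ℝ)/2)⁻¹ = 2 := by norm_num
        calc (1 - (N p)⁻¹)⁻¹ ≤ ((1:ℝ)/2)⁻¹ := inv_anti₀ (by norm_num) (by linarith)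
          _ = 2 := by norm_num
      have hb2 : (1 - N p^(-σ₀))⁻¹ ≤ 2 := by
        calc (1 - N p^(-σ₀))⁻¹ ≤ ((1:ℝ)/2)⁻¹ := by
              refine inv_anti₀ (by norm_num) ?_
              have := le_trans hs0 hinv2
              linarith
          _ = 2 := by norm_num
      have hcl := c_lower_one hb (by linarith : (0:ℝ) < σ₂)
      calc ∑' k:ℕ, -Real.log (1 - N p ^ (-(σ₀+(k:ℝ))))
          ≤ ∑' k:ℕ, (1 - N p^(-σ₀))⁻¹ * (N p^(-σ₀) * ((N p)⁻¹)^k) :=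
            Summable.tsum_le_tsum (hterm_le p) (hpa p) (hgeo p)
        _ = (1 - N p^(-σ₀))⁻¹ * (N p^(-σ₀) * (1 - (N p)⁻¹)⁻¹) := hgeosum
        _ ≤ 2 * (N p^(-σ₂) * 2) := by
            have m1 : N p^(-σ₀) * (1 - (N p)⁻¹)⁻¹ ≤ N p^(-σ₂) * 2 := by
              refine mul_le_mul hs2 hb1 (inv_nonneg.mpr ?_) hx2pos.le
              have := le_trans hs0 hinv2
              linarith
            refine mul_le_mul hb2 m1 ?_ (by norm_num)
            exact mul_nonneg (hY0 p).le (inv_nonneg.mpr (by linarith [le_trans hs0 hinv2]))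
        _ = 4 * N p^(-σ₂) := by ring
        _ ≤ 4 * (N p^(-σ₂) * (1 - N p^(-σ₂))⁻¹) := by
            refine mul_le_mul_of_nonneg_left hcl (by norm_num)
        _ ≤ C * (N p^(-σ₂) * (1 - N p^(-σ₂))⁻¹) := by
            refine mul_le_mul_of_nonneg_right ?_ hcp0
            rw [hC]
            have h2pos : (0:ℝ) < (2:ℝ)^σ₂ := Real.rpow_pos_of_pos (by norm_num) _
            nlinarith [mul_nonneg (mul_nonneg hBnn (by linarith : (0:ℝ) ≤ σ₂)) h2pos.le]
  refine (summable_prod_of_nonneg (fun q => hterm_nonneg q.1 q.2)).mpr ⟨hpa, ?_⟩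
  refine Summable.of_nonneg_of_le (fun p => tsum_nonneg (hterm_nonneg p)) hpb
    ((c_summable hN (by linarith : (0:ℝ) < σ₂) hs).mul_left C)

end Master2
end SelbergAux

namespace SelbergAux
section Master3
variable {P : Type*} {N : P → ℝ}

set_option maxHeartbeats 2000000 in
lemma summable_triple (hN : ∀ p, 1 < N p) {σ₂ σ : ℝ} (h2 : 1 < σ₂) (h2σ : σ₂ < σ)
    (hs : Summable fun q : P × ℕ => N q.1 ^ (-((q.2:ℝ) + 1) * σ₂)) :
    Summable (fun t : (P × ℕ) × ℕ =>
      Real.log (N t.1.1) * (N t.1.1 ^ (-(σ + (t.1.2:ℝ)))) ^ (t.2 + 1)) := by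
  have h1σ : 1 < σ := h2.trans h2σ
  have hb0' : ∀ p, (0:ℝ) < N p := fun p => lt_trans one_pos (hN p)
  have hL0 : ∀ p, 0 < Real.log (N p) := fun p => Real.log_pos (hN p)
  have hYpos : ∀ p (k:ℕ), 0 < N p ^ (-(σ+(k:ℝ))) := fun p k => Real.rpow_pos_of_pos (hb0' p) _
  have hYlt : ∀ p (k:ℕ), N p ^ (-(σ+(k:ℝ))) < 1 := fun p k =>
    Real.rpow_lt_one_of_one_lt_of_neg (hN p)
      (by have := Nat.cast_nonneg (α := ℝ) k; linarith)
  have hYle : ∀ p (k:ℕ), N p ^ (-(σ+(k:ℝ))) ≤ N p ^ (-σ) := fun p k =>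
    Real.rpow_le_rpow_of_exponent_le (hN p).le
      (by have := Nat.cast_nonneg (α := ℝ) k; linarith)
  have hZ0 : ∀ p, 0 < N p ^ (-σ) := fun p => Real.rpow_pos_of_pos (hb0' p) _
  have hZ1 : ∀ p, N p ^ (-σ) < 1 := fun p =>
    Real.rpow_lt_one_of_one_lt_of_neg (hN p) (by linarith)
  have hnn : ∀ t : (P × ℕ) × ℕ,
      0 ≤ Real.log (N t.1.1) * (N t.1.1 ^ (-(σ + (t.1.2:ℝ)))) ^ (t.2 + 1) :=
    fun t => mul_nonneg (hL0 t.1.1).le (pow_nonneg (hYpos t.1.1 t.1.2).le _)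
  refine (summable_prod_of_nonneg hnn).mpr ⟨fun q => ?_, ?_⟩
  · simpa using ((summable_pow_succ (hYpos q.1 q.2).le (hYlt q.1 q.2)).mul_left
      (Real.log (N q.1)))
  -- closed form of inner sums
  have hclosed : ∀ q : P × ℕ, (∑' m:ℕ, Real.log (N q.1) * (N q.1 ^ (-(σ + (q.2:ℝ)))) ^ (m + 1))
      = Real.log (N q.1) * (N q.1 ^ (-(σ + (q.2:ℝ))) * (1 - N q.1 ^ (-(σ + (q.2:ℝ))))⁻¹) := by
    intro q
    rw [tsum_mul_left, tsum_pow_succ (hYpos q.1 q.2).le (hYlt q.1 q.2)]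
  refine Summable.congr ?_ (fun q => (hclosed q).symm)
  -- now summability over P × ℕ of q ↦ L * (Y * (1-Y)⁻¹)
  have hnn2 : ∀ q : P × ℕ,
      0 ≤ Real.log (N q.1) * (N q.1 ^ (-(σ + (q.2:ℝ))) * (1 - N q.1 ^ (-(σ + (q.2:ℝ))))⁻¹) :=
    fun q => mul_nonneg (hL0 q.1).le (mul_nonneg (hYpos q.1 q.2).le
      (inv_nonneg.mpr (by linarith [hYlt q.1 q.2])))
  have hterm_le : ∀ p (k:ℕ),
      Real.log (N p) * (N p ^ (-(σ + (k:ℝ))) * (1 - N p ^ (-(σ + (k:ℝ))))⁻¹)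
      ≤ (Real.log (N p) * (1 - N p^(-σ))⁻¹) * (N p^(-σ) * ((N p)⁻¹)^k) := by
    intro p k
    have hinv : (1 - N p ^ (-(σ+(k:ℝ))))⁻¹ ≤ (1 - N p^(-σ))⁻¹ :=
      inv_anti₀ (by linarith [hZ1 p]) (by linarith [hYle p k])
    calc Real.log (N p) * (N p ^ (-(σ + (k:ℝ))) * (1 - N p ^ (-(σ + (k:ℝ))))⁻¹)
        ≤ Real.log (N p) * (N p ^ (-(σ + (k:ℝ))) * (1 - N p^(-σ))⁻¹) := by
          refine mul_le_mul_of_nonneg_left (mul_le_mul_of_nonneg_left hinv (hYpos p k).le) (hL0 p).le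
      _ = (Real.log (N p) * (1 - N p^(-σ))⁻¹) * (N p^(-σ) * ((N p)⁻¹)^k) := by
          rw [rpow_neg_add_nat (hb0' p)]; ring
  have hgeo : ∀ p, Summable (fun k:ℕ =>
      (Real.log (N p) * (1 - N p^(-σ))⁻¹) * (N p^(-σ) * ((N p)⁻¹)^k)) := by
    intro p
    have hi0 : (0:ℝ) ≤ (N p)⁻¹ := inv_nonneg.mpr (hb0' p).le
    have hi1 : (N p)⁻¹ < 1 := inv_lt_one_of_one_lt₀ (hN p)
    exact ((summable_geometric_of_lt_one hi0 hi1).mul_left _).mul_left _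
  have hpa : ∀ p, Summable (fun k:ℕ =>
      Real.log (N p) * (N p ^ (-(σ + (k:ℝ))) * (1 - N p ^ (-(σ + (k:ℝ))))⁻¹)) :=
    fun p => Summable.of_nonneg_of_le (fun k => hnn2 (p, k)) (hterm_le p) (hgeo p)
  set C : ℝ := 2 * (2:ℝ)^σ * σ₂ * (2:ℝ)^σ₂ / σ + 4 / (σ - σ₂) with hC
  have h2σpos : (0:ℝ) < (2:ℝ)^σ := Real.rpow_pos_of_pos (by norm_num) _
  have h2σ₂pos : (0:ℝ) < (2:ℝ)^σ₂ := Real.rpow_pos_of_pos (by norm_num) _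
  have hpb : ∀ p, ∑' k:ℕ, Real.log (N p) * (N p ^ (-(σ + (k:ℝ))) * (1 - N p ^ (-(σ + (k:ℝ))))⁻¹)
      ≤ C * (N p^(-σ₂) * (1 - N p^(-σ₂))⁻¹) := by
    intro p
    have hb : 1 < N p := hN p
    have hb0 : (0:ℝ) < N p := hb0' p
    have hL : 0 < Real.log (N p) := hL0 p
    have hx2pos : 0 < N p^(-σ₂) := Real.rpow_pos_of_pos hb0 _
    have hx2lt : N p^(-σ₂) < 1 :=
      Real.rpow_lt_one_of_one_lt_of_neg hb (by linarith : -σ₂ < 0)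
    have hcp0 : 0 ≤ N p^(-σ₂) * (1 - N p^(-σ₂))⁻¹ :=
      mul_nonneg hx2pos.le (inv_nonneg.mpr (by linarith))
    have hi1 : (N p)⁻¹ < 1 := inv_lt_one_of_one_lt₀ hb
    have hstep1 : ∑' k:ℕ, Real.log (N p) * (N p ^ (-(σ + (k:ℝ))) * (1 - N p ^ (-(σ + (k:ℝ))))⁻¹)
        ≤ (Real.log (N p) * (1 - N p^(-σ))⁻¹) * (N p^(-σ) * (1 - (N p)⁻¹)⁻¹) := by
      calc ∑' k:ℕ, Real.log (N p) * (N p ^ (-(σ + (k:ℝ))) * (1 - N p ^ (-(σ + (k:ℝ))))⁻¹)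
          ≤ ∑' k:ℕ, (Real.log (N p) * (1 - N p^(-σ))⁻¹) * (N p^(-σ) * ((N p)⁻¹)^k) :=
            Summable.tsum_le_tsum (hterm_le p) (hpa p) (hgeo p)
        _ = (Real.log (N p) * (1 - N p^(-σ))⁻¹) * (N p^(-σ) * (1 - (N p)⁻¹)⁻¹) := by
            rw [tsum_mul_left, tsum_mul_left,
              tsum_geometric_of_lt_one (inv_nonneg.mpr hb0.le) hi1]
    rcases le_or_gt (N p) 2 with hr2 | hr2
    · -- small base
      have hone := one_sub_rpow_lower hb (c := (1:ℝ)) one_pos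
      rw [Real.rpow_neg_one] at hone
      -- hone : 1 * log r * r⁻¹ ≤ 1 - r⁻¹
      have hfac1 : Real.log (N p) * (1 - (N p)⁻¹)⁻¹ ≤ N p := by
        have hpos : 0 < Real.log (N p) * (N p)⁻¹ := by positivity
        have hinv := inv_anti₀ (by nlinarith) (by nlinarith : Real.log (N p) * (N p)⁻¹ ≤ 1 - (N p)⁻¹)
        calc Real.log (N p) * (1 - (N p)⁻¹)⁻¹
            ≤ Real.log (N p) * (Real.log (N p) * (N p)⁻¹)⁻¹ :=
              mul_le_mul_of_nonneg_left hinv hL.le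
          _ = N p := by
              rw [mul_inv, inv_inv]
              field_simp
      have hfacσ := one_sub_rpow_lower hb (c := σ) (by linarith)
      have hinvσ : (1 - N p^(-σ))⁻¹ ≤ (σ * Real.log (N p))⁻¹ * N p^σ := by
        have hApos : 0 < σ * Real.log (N p) * N p ^ (-σ) := by
          have := hZ0 p; positivity
        refine le_trans (inv_anti₀ hApos hfacσ) (le_of_eq ?_)
        rw [mul_inv, Real.rpow_neg hb0.le, inv_inv]
      have hNσ : N p^σ ≤ (2:ℝ)^σ := Real.rpow_le_rpow hb0.le hr2 (by linarith)
      have hcl := c_lower_small hb hr2 (by linarith : (0:ℝ) < σ₂)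
      have hchain : (Real.log (N p) * (1 - N p^(-σ))⁻¹) * (N p^(-σ) * (1 - (N p)⁻¹)⁻¹)
          ≤ 2 * ((2:ℝ)^σ * (σ * Real.log (N p))⁻¹) := by
        have e1 : (Real.log (N p) * (1 - N p^(-σ))⁻¹) * (N p^(-σ) * (1 - (N p)⁻¹)⁻¹)
            = (Real.log (N p) * (1 - (N p)⁻¹)⁻¹) * (N p^(-σ) * (1 - N p^(-σ))⁻¹) := by ring
        rw [e1]
        have hb1 : N p^(-σ) * (1 - N p^(-σ))⁻¹ ≤ 1 * ((σ * Real.log (N p))⁻¹ * N p^σ) := by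
          refine mul_le_mul (Real.rpow_le_one_of_one_le_of_nonpos hb.le (by linarith)) hinvσ
            (inv_nonneg.mpr (by linarith [hZ1 p])) (by norm_num)
        have hb2 : (σ * Real.log (N p))⁻¹ * N p^σ ≤ (σ * Real.log (N p))⁻¹ * (2:ℝ)^σ :=
          mul_le_mul_of_nonneg_left hNσ (inv_nonneg.mpr (by positivity))
        calc (Real.log (N p) * (1 - (N p)⁻¹)⁻¹) * (N p^(-σ) * (1 - N p^(-σ))⁻¹)
            ≤ N p * (1 * ((σ * Real.log (N p))⁻¹ * N p^σ)) := by
              refine mul_le_mul hfac1 hb1 ?_ (by linarith)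
              exact mul_nonneg (hZ0 p).le (inv_nonneg.mpr (by linarith [hZ1 p]))
          _ ≤ 2 * (1 * ((σ * Real.log (N p))⁻¹ * (2:ℝ)^σ)) := by
              refine mul_le_mul hr2 ?_ ?_ (by norm_num)
              · simpa using hb2
              · have : (0:ℝ) ≤ (σ * Real.log (N p))⁻¹ := inv_nonneg.mpr (by positivity)
                positivity
          _ = 2 * ((2:ℝ)^σ * (σ * Real.log (N p))⁻¹) := by ring
      have hfinal : 2 * ((2:ℝ)^σ * (σ * Real.log (N p))⁻¹)
          ≤ C * (N p^(-σ₂) * (1 - N p^(-σ₂))⁻¹) := by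
        have e2 : 2 * ((2:ℝ)^σ * (σ * Real.log (N p))⁻¹)
            = (2 * (2:ℝ)^σ * σ₂ * (2:ℝ)^σ₂ / σ) * ((2:ℝ)^(-σ₂) * (σ₂ * Real.log (N p))⁻¹) := by
          rw [Real.rpow_neg (by norm_num : (0:ℝ) ≤ 2), mul_inv, mul_inv]
          have hσne : σ ≠ 0 := by linarith
          have hσ₂ne : σ₂ ≠ 0 := by linarith
          have hLne : Real.log (N p) ≠ 0 := ne_of_gt hL
          have h2ne : ((2:ℝ)^σ₂) ≠ 0 := ne_of_gt h2σ₂pos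
          field_simp
        rw [e2]
        calc (2 * (2:ℝ)^σ * σ₂ * (2:ℝ)^σ₂ / σ) * ((2:ℝ)^(-σ₂) * (σ₂ * Real.log (N p))⁻¹)
            ≤ (2 * (2:ℝ)^σ * σ₂ * (2:ℝ)^σ₂ / σ) * (N p^(-σ₂) * (1 - N p^(-σ₂))⁻¹) := by
              refine mul_le_mul_of_nonneg_left hcl ?_
              exact div_nonneg (mul_nonneg (mul_nonneg (mul_nonneg (by norm_num)
                h2σpos.le) (by linarith)) h2σ₂pos.le) (by linarith)
          _ ≤ C * (N p^(-σ₂) * (1 - N p^(-σ₂))⁻¹) := by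
              refine mul_le_mul_of_nonneg_right ?_ hcp0
              rw [hC]
              have : (0:ℝ) ≤ 4 / (σ - σ₂) := div_nonneg (by norm_num) (by linarith)
              linarith
      exact le_trans hstep1 (le_trans hchain hfinal)
    · -- large base
      have hinv2 : (N p)⁻¹ ≤ 1/2 := by
        have h := inv_anti₀ (by norm_num : (0:ℝ) < 2) hr2.le
        simpa using h
      have hs0 : N p^(-σ) ≤ (N p)⁻¹ := by
        rw [← Real.rpow_neg_one (N p)]
        exact Real.rpow_le_rpow_of_exponent_le hb.le (by linarith)
      have hb1 : (1 - (N p)⁻¹)⁻¹ ≤ 2 := by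
        calc (1 - (N p)⁻¹)⁻¹ ≤ ((1:ℝ)/2)⁻¹ := inv_anti₀ (by norm_num) (by linarith)
          _ = 2 := by norm_num
      have hb2 : (1 - N p^(-σ))⁻¹ ≤ 2 := by
        calc (1 - N p^(-σ))⁻¹ ≤ ((1:ℝ)/2)⁻¹ := by
              refine inv_anti₀ (by norm_num) ?_
              have := le_trans hs0 hinv2
              linarith
          _ = 2 := by norm_num
      have hlogle : Real.log (N p) ≤ N p^(σ - σ₂) / (σ - σ₂) :=
        log_le_rpow_div hb.le (by linarith)
      have hrs : N p^(σ - σ₂) * N p^(-σ) = N p^(-σ₂) := by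
        rw [← Real.rpow_add hb0]; ring_nf
      have hcl := c_lower_one hb (by linarith : (0:ℝ) < σ₂)
      have hchain : (Real.log (N p) * (1 - N p^(-σ))⁻¹) * (N p^(-σ) * (1 - (N p)⁻¹)⁻¹)
          ≤ 4 / (σ - σ₂) * N p^(-σ₂) := by
        have h4 : (Real.log (N p) * (1 - N p^(-σ))⁻¹) * (N p^(-σ) * (1 - (N p)⁻¹)⁻¹)
            ≤ (Real.log (N p) * 2) * (N p^(-σ) * 2) := by
          refine mul_le_mul (mul_le_mul_of_nonneg_left hb2 hL.le)
            (mul_le_mul_of_nonneg_left hb1 (hZ0 p).le) ?_ ?_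
          · exact mul_nonneg (hZ0 p).le (inv_nonneg.mpr (by linarith [le_trans hs0 hinv2]))
          · positivity
        have h5 : (Real.log (N p) * 2) * (N p^(-σ) * 2)
            ≤ (N p^(σ-σ₂)/(σ-σ₂) * 2) * (N p^(-σ) * 2) := by
          refine mul_le_mul_of_nonneg_right (mul_le_mul_of_nonneg_right hlogle (by norm_num)) ?_
          have := hZ0 p; positivity
        have h6 : (N p^(σ-σ₂)/(σ-σ₂) * 2) * (N p^(-σ) * 2) = 4 / (σ - σ₂) * N p^(-σ₂) := by
          rw [← hrs]; field_simp; ring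
        linarith
      calc ∑' k:ℕ, Real.log (N p) * (N p ^ (-(σ + (k:ℝ))) * (1 - N p ^ (-(σ + (k:ℝ))))⁻¹)
          ≤ (Real.log (N p) * (1 - N p^(-σ))⁻¹) * (N p^(-σ) * (1 - (N p)⁻¹)⁻¹) := hstep1
        _ ≤ 4 / (σ - σ₂) * N p^(-σ₂) := hchain
        _ ≤ 4 / (σ - σ₂) * (N p^(-σ₂) * (1 - N p^(-σ₂))⁻¹) := by
            refine mul_le_mul_of_nonneg_left hcl
              (div_nonneg (by norm_num) (by linarith))
        _ ≤ C * (N p^(-σ₂) * (1 - N p^(-σ₂))⁻¹) := by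
            refine mul_le_mul_of_nonneg_right ?_ hcp0
            rw [hC]
            have : (0:ℝ) ≤ 2 * (2:ℝ)^σ * σ₂ * (2:ℝ)^σ₂ / σ :=
              div_nonneg (mul_nonneg (mul_nonneg (mul_nonneg (by norm_num)
                h2σpos.le) (by linarith)) h2σ₂pos.le) (by linarith)
            linarith
  refine (summable_prod_of_nonneg (fun q => hnn2 q)).mpr ⟨hpa, ?_⟩
  exact Summable.of_nonneg_of_le (fun p => tsum_nonneg (fun k => hnn2 (p, k))) hpb
    ((c_summable hN (by linarith : (0:ℝ) < σ₂) hs).mul_left C)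

end Master3
end SelbergAux

namespace SelbergAux
lemma norm_log_one_sub_le {z : ℂ} (hz : ‖z‖ < 1) :
    ‖Complex.log (1 - z)‖ ≤ -Real.log (1 - ‖z‖) := by
  have hs := Complex.hasSum_taylorSeries_neg_log hz
  have habs : |‖z‖| < 1 := by rwa [_root_.abs_of_nonneg (norm_nonneg z)]
  have hr := Real.hasSum_pow_div_log_of_abs_lt_one habs
  have hg : HasSum (fun n : ℕ => ‖z ^ n / (n:ℂ)‖) (-Real.log (1 - ‖z‖)) := by
    have h1 : HasSum (fun n : ℕ => ‖z ^ (n+1) / (((n:ℕ)+1 : ℕ):ℂ)‖) (-Real.log (1 - ‖z‖)) := by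
      refine HasSum.congr_fun hr fun n => ?_
      rw [norm_div, norm_pow, Complex.norm_natCast]
      push_cast; ring
    have h2 := (hasSum_nat_add_iff (f := fun n : ℕ => ‖z ^ n / (n:ℂ)‖) 1).mp h1
    simpa using h2
  calc ‖Complex.log (1 - z)‖ = ‖-Complex.log (1 - z)‖ := (norm_neg _).symm
      _ = ‖∑' n : ℕ, z ^ n / (n:ℂ)‖ := by rw [hs.tsum_eq]
      _ ≤ ∑' n : ℕ, ‖z ^ n / (n:ℂ)‖ := norm_tsum_le_tsum_norm hg.summable
      _ = -Real.log (1 - ‖z‖) := hg.tsum_eq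


lemma neg_log_one_sub_mono {x y : ℝ} (h0 : 0 ≤ x) (hxy : x ≤ y) (h1 : y < 1) :
    -Real.log (1 - x) ≤ -Real.log (1 - y) := by
  have := Real.log_le_log (by linarith : (0:ℝ) < 1 - y) (by linarith : 1 - y ≤ 1 - x)
  linarith


lemma ctsum_pow_succ {x : ℂ} (h1 : ‖x‖ < 1) :
    ∑' k : ℕ, x ^ (k + 1) = x * (1 - x)⁻¹ := by
  simp_rw [pow_succ]
  rw [tsum_mul_right, tsum_geometric_of_norm_lt_one h1, mul_comm]



lemma cexp_ofReal_rpow {b : ℝ} (hb : 0 < b) (w : ℂ) :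
    (b:ℂ) ^ w = Complex.exp ((Real.log b : ℂ) * w) := by
  rw [cpow_def_of_ne_zero (by exact_mod_cast ne_of_gt hb), Complex.ofReal_log hb.le]

lemma inner_sum {b : ℝ} (hb : 1 < b) {s : ℂ} (hs : 0 < s.re) (m : ℕ) :
    ∑' k : ℕ, (Real.log b : ℂ) * ((b:ℂ) ^ (-s - (k:ℂ))) ^ (m+1)
      = ((Real.log b / (1 - ((b ^ (m+1) : ℝ))⁻¹) : ℝ) : ℂ) * (((b ^ (m+1) : ℝ)) : ℂ) ^ (-s) := by
  have hb0 : (0:ℝ) < b := lt_trans one_pos hb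
  have hL : 0 < Real.log b := Real.log_pos hb
  set l : ℂ := (Real.log b : ℂ) with hl
  -- the ratio
  set ζ : ℂ := Complex.exp (-(((m+1:ℕ)):ℂ) * l) with hζ
  have hζre : (-(((m+1:ℕ)):ℂ) * l).re = -((m+1:ℕ):ℝ) * Real.log b := by
    simp [hl, Complex.mul_re]
  have hζnorm : ‖ζ‖ < 1 := by
    rw [hζ, Complex.norm_exp, hζre]
    apply Real.exp_lt_one_iff.mpr
    have : (0:ℝ) < ((m+1:ℕ):ℝ) := by positivity
    nlinarith
  have hζreal : ζ = ((( (b ^ (m+1) : ℝ))⁻¹ : ℝ) : ℂ) := by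
    have h1 : ((b ^ (m+1) : ℝ))⁻¹ = Real.exp (-((m+1:ℕ):ℝ) * Real.log b) := by
      rw [neg_mul, Real.exp_neg, Real.exp_nat_mul, Real.exp_log hb0]
    rw [h1, Complex.ofReal_exp, hζ]
    congr 1
    push_cast
    ring
  have hterm : ∀ k : ℕ, (Real.log b : ℂ) * ((b:ℂ) ^ (-s - (k:ℂ))) ^ (m+1)
      = (l * Complex.exp ((((m+1:ℕ)):ℂ) * l * (-s))) * ζ ^ k := by
    intro k
    rw [cexp_ofReal_rpow hb0, ← Complex.exp_nat_mul, hζ, ← Complex.exp_nat_mul,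
      mul_assoc, ← Complex.exp_add]
    congr 2
    push_cast
    ring
  rw [tsum_congr hterm, tsum_mul_left, tsum_geometric_of_norm_lt_one hζnorm]
  have hcpow : (((b ^ (m+1) : ℝ)) : ℂ) ^ (-s) = Complex.exp ((((m+1:ℕ)):ℂ) * l * (-s)) := by
    rw [cexp_ofReal_rpow (by positivity)]
    congr 1
    rw [Real.log_pow]
    push_cast
    ring
  rw [hcpow, Complex.ofReal_div, hζreal]
  push_cast
  rw [div_eq_mul_inv]
  ring


end SelbergAux

def SelbergSwap (P : Type*) : ((P × ℕ) × ℕ) ≃ ((P × ℕ) × ℕ) where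
  toFun t := ((t.1.1, t.2), t.1.2)
  invFun t := ((t.1.1, t.2), t.1.2)
  left_inv t := rfl
  right_inv t := rfl

set_option maxHeartbeats 2000000 in
/-- The set of all (not necessarily primitive) classes: a primitive class together
with a positive power `n = q.2 + 1`, with norm `N(γ₀)^n`. -/
theorem selberg_log_deriv_as_lefschetz_series
    (P : Type*) [Countable P]
    (N : P → ℝ) (hN : ∀ p, 1 < N p)
    (hsum : ∀ σ : ℝ, 1 < σ →
      Summable fun q : P × ℕ => N q.1 ^ (-((q.2 : ℝ) + 1) * σ))
    (Z : ℂ → ℂ)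
    (hZ : Z = fun s => ∏' q : P × ℕ, (1 - (N q.1 : ℂ) ^ (-s - (q.2 : ℂ))))
    (NE : P × ℕ → ℝ) (hNE : ∀ q : P × ℕ, NE q = N q.1 ^ (q.2 + 1)) :
    ∀ s : ℂ, 1 < s.re →
      deriv Z s / Z s =
        ∑' q : P × ℕ,
          ((Real.log (N q.1) / (1 - (NE q)⁻¹) : ℝ) : ℂ) * (NE q : ℂ) ^ (-s) := by
  subst hZ
  intro s hs1
  set σ₀ : ℝ := (1 + s.re)/2 with hσ₀def
  set σ₂ : ℝ := (1 + σ₀)/2 with hσ₂def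
  have hσ₀1 : 1 < σ₀ := by rw [hσ₀def]; linarith
  have hσ₀s : σ₀ < s.re := by rw [hσ₀def]; linarith
  have hσ₂1 : 1 < σ₂ := by rw [hσ₂def]; linarith
  have hσ₂0 : σ₂ < σ₀ := by rw [hσ₂def]; linarith
  have hb0 : ∀ p, (0:ℝ) < N p := fun p => lt_trans one_pos (hN p)
  have hsum2 := hsum σ₂ hσ₂1
  set U : Set ℂ := {w : ℂ | σ₀ < w.re} with hUdef
  have hUopen : IsOpen U := isOpen_lt continuous_const Complex.continuous_re
  have hsU : s ∈ U := hσ₀s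
  have hnormz : ∀ (q : P × ℕ) (w : ℂ),
      ‖(N q.1 : ℂ) ^ (-w - (q.2:ℂ))‖ = N q.1 ^ (-(w.re + (q.2:ℝ))) := by
    intro q w
    rw [Complex.norm_cpow_eq_rpow_re_of_pos (hb0 q.1)]
    congr 1
    simp [Complex.sub_re, Complex.neg_re]
    ring
  have hX0 : ∀ q : P × ℕ, 0 < N q.1 ^ (-(σ₀ + (q.2:ℝ))) :=
    fun q => Real.rpow_pos_of_pos (hb0 q.1) _
  have hX1 : ∀ q : P × ℕ, N q.1 ^ (-(σ₀ + (q.2:ℝ))) < 1 := fun q =>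
    Real.rpow_lt_one_of_one_lt_of_neg (hN q.1)
      (by have := Nat.cast_nonneg (α := ℝ) q.2; linarith)
  have hzle : ∀ (q : P × ℕ) (w : ℂ), w ∈ U →
      ‖(N q.1 : ℂ) ^ (-w - (q.2:ℂ))‖ ≤ N q.1 ^ (-(σ₀ + (q.2:ℝ))) := by
    intro q w hw
    rw [hnormz]
    have hw' : σ₀ < w.re := hw
    exact Real.rpow_le_rpow_of_exponent_le (hN q.1).le (by linarith)
  have hzlt1 : ∀ (q : P × ℕ) (w : ℂ), w ∈ U → ‖(N q.1 : ℂ) ^ (-w - (q.2:ℂ))‖ < 1 :=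
    fun q w hw => lt_of_le_of_lt (hzle q w hw) (hX1 q)
  have hfne : ∀ (q : P × ℕ) (w : ℂ), w ∈ U →
      (1 : ℂ) - (N q.1 : ℂ) ^ (-w - (q.2:ℂ)) ≠ 0 := by
    intro q w hw h
    have h1 : (N q.1 : ℂ) ^ (-w - (q.2:ℂ)) = 1 := (sub_eq_zero.mp h).symm
    have h2 := hzlt1 q w hw
    rw [h1, norm_one] at h2
    exact lt_irrefl 1 h2
  have hslit : ∀ (q : P × ℕ) (w : ℂ), w ∈ U →
      (1 : ℂ) - (N q.1 : ℂ) ^ (-w - (q.2:ℂ)) ∈ Complex.slitPlane := by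
    intro q w hw
    refine Complex.mem_slitPlane_iff.mpr (Or.inl ?_)
    have h1 := hzlt1 q w hw
    have h2 : ((N q.1 : ℂ) ^ (-w - (q.2:ℂ))).re ≤ ‖(N q.1 : ℂ) ^ (-w - (q.2:ℂ))‖ := by
      exact Complex.re_le_norm _
    simp only [Complex.sub_re, Complex.one_re]
    linarith
  have hFd : ∀ (q : P × ℕ) (w : ℂ), w ∈ U →
      HasDerivAt (fun w => Complex.log (1 - (N q.1 : ℂ) ^ (-w - (q.2:ℂ))))
        ((Real.log (N q.1) : ℂ) * (N q.1 : ℂ) ^ (-w - (q.2:ℂ))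
          / (1 - (N q.1 : ℂ) ^ (-w - (q.2:ℂ)))) w := by
    intro q w hw
    have hcne : (N q.1 : ℂ) ≠ 0 := by
      exact_mod_cast ne_of_gt (hb0 q.1)
    have hinner : HasDerivAt (fun w : ℂ => -w - (q.2:ℂ)) (-1) w :=
      ((hasDerivAt_id w).neg.sub_const _)
    have hcp := hinner.const_cpow (c := (N q.1 : ℂ)) (Or.inl hcne)
    have hf : HasDerivAt (fun w => (1:ℂ) - (N q.1 : ℂ) ^ (-w - (q.2:ℂ)))
        ((Real.log (N q.1) : ℂ) * (N q.1 : ℂ) ^ (-w - (q.2:ℂ))) w := by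
      have h1 := (hasDerivAt_const w (1:ℂ)).sub hcp
      refine h1.congr_deriv ?_
      rw [Complex.ofReal_log (hb0 q.1).le]
      ring
    exact hf.clog (hslit q w hw)
  have hFdiff : ∀ q : P × ℕ, DifferentiableOn ℂ
      (fun w => Complex.log (1 - (N q.1 : ℂ) ^ (-w - (q.2:ℂ)))) U :=
    fun q w hw => ((hFd q w hw).differentiableAt).differentiableWithinAt
  have hu := SelbergAux.summable_neg_log hN hσ₂1 hσ₂0 hsum2
  have hFle : ∀ (q : P × ℕ), ∀ w ∈ U,
      ‖Complex.log (1 - (N q.1 : ℂ) ^ (-w - (q.2:ℂ)))‖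
        ≤ -Real.log (1 - N q.1 ^ (-(σ₀ + (q.2:ℝ)))) := by
    intro q w hw
    refine le_trans (SelbergAux.norm_log_one_sub_le (hzlt1 q w hw)) ?_
    exact SelbergAux.neg_log_one_sub_mono (norm_nonneg _) (hzle q w hw) (hX1 q)
  have hGdiff := differentiableOn_tsum_of_summable_norm hu hFdiff hUopen hFle
  have hGs := hasSum_deriv_of_summable_norm hu hFdiff hUopen hFle hsU
  have hFsum : ∀ x : U, Summable fun q : P × ℕ =>
      Complex.log (1 - (N q.1 : ℂ) ^ (-(x:ℂ) - (q.2:ℂ))) := fun x =>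
    Summable.of_norm (Summable.of_nonneg_of_le (fun q => norm_nonneg _)
      (fun q => hFle q x x.2) hu)
  have hprod := fun x : U => Complex.cexp_tsum_eq_tprod
      (f := fun q : P × ℕ => 1 - (N q.1 : ℂ) ^ (-(x:ℂ) - (q.2:ℂ)))
      (fun q => hfne q x x.2) (hFsum x)
  have hZeq : ∀ w ∈ U, (∏' q : P × ℕ, (1 - (N q.1 : ℂ) ^ (-w - (q.2:ℂ))))
      = Complex.exp (∑' q : P × ℕ,
          Complex.log (1 - (N q.1 : ℂ) ^ (-w - (q.2:ℂ)))) := by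
    intro w hw
    exact (hprod ⟨w, hw⟩).symm
  have hZev : (fun w => ∏' q : P × ℕ, (1 - (N q.1 : ℂ) ^ (-w - (q.2:ℂ))))
      =ᶠ[nhds s] (fun w => Complex.exp (∑' q : P × ℕ,
          Complex.log (1 - (N q.1 : ℂ) ^ (-w - (q.2:ℂ))))) :=
    Filter.eventuallyEq_of_mem (hUopen.mem_nhds hsU) (fun w hw => hZeq w hw)
  have hGdat : HasDerivAt (fun w => ∑' q : P × ℕ,
        Complex.log (1 - (N q.1 : ℂ) ^ (-w - (q.2:ℂ))))
      (deriv (fun w => ∑' q : P × ℕ,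
        Complex.log (1 - (N q.1 : ℂ) ^ (-w - (q.2:ℂ)))) s) s :=
    (hGdiff.differentiableAt (hUopen.mem_nhds hsU)).hasDerivAt
  have hderivZ : deriv (fun w => ∏' q : P × ℕ, (1 - (N q.1 : ℂ) ^ (-w - (q.2:ℂ)))) s
      = Complex.exp (∑' q : P × ℕ, Complex.log (1 - (N q.1 : ℂ) ^ (-s - (q.2:ℂ))))
        * deriv (fun w => ∑' q : P × ℕ,
            Complex.log (1 - (N q.1 : ℂ) ^ (-w - (q.2:ℂ)))) s := by
    rw [hZev.deriv_eq]
    exact hGdat.cexp.deriv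
  have hmain : deriv (fun w => ∏' q : P × ℕ, (1 - (N q.1 : ℂ) ^ (-w - (q.2:ℂ)))) s
      / (∏' q : P × ℕ, (1 - (N q.1 : ℂ) ^ (-s - (q.2:ℂ))))
      = deriv (fun w => ∑' q : P × ℕ,
          Complex.log (1 - (N q.1 : ℂ) ^ (-w - (q.2:ℂ)))) s := by
    rw [hderivZ, hZeq s hsU]
    exact mul_div_cancel_left₀ _ (Complex.exp_ne_zero _)
  -- rearrangement into the Lefschetz series
  have hA : ∀ q : P × ℕ, ‖(N q.1 : ℂ) ^ (-s - (q.2:ℂ))‖ < 1 := fun q => hzlt1 q s hsU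
  set g : (P × ℕ) × ℕ → ℂ := fun t =>
    (Real.log (N t.1.1) : ℂ) * ((N t.1.1 : ℂ) ^ (-s - (t.1.2:ℂ))) ^ (t.2+1) with hgdef
  have hgnorm : ∀ t, ‖g t‖ = Real.log (N t.1.1)
      * (N t.1.1 ^ (-(s.re + (t.1.2:ℝ)))) ^ (t.2+1) := by
    intro t
    rw [hgdef]
    simp only []
    rw [norm_mul, norm_pow, hnormz, Complex.norm_real, Real.norm_eq_abs,
      _root_.abs_of_nonneg (Real.log_nonneg (hN t.1.1).le)]
  have hg : Summable g := by
    refine Summable.of_norm ?_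
    refine (SelbergAux.summable_triple hN hσ₂1 (by linarith : σ₂ < s.re) hsum2).congr ?_
    intro t
    rw [hgnorm t]
  have hper : ∀ q : P × ℕ,
      (Real.log (N q.1) : ℂ) * (N q.1 : ℂ) ^ (-s - (q.2:ℂ))
        / (1 - (N q.1 : ℂ) ^ (-s - (q.2:ℂ))) = ∑' m : ℕ, g (q, m) := by
    intro q
    have : ∑' m : ℕ, g (q, m) = (Real.log (N q.1) : ℂ)
        * ((N q.1 : ℂ) ^ (-s - (q.2:ℂ)) * (1 - (N q.1 : ℂ) ^ (-s - (q.2:ℂ)))⁻¹) := by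
      rw [hgdef]
      simp only []
      rw [tsum_mul_left, SelbergAux.ctsum_pow_succ (hA q)]
    rw [this, div_eq_mul_inv]
    ring
  have hge : Summable (fun t => g (SelbergSwap P t)) :=
    ((SelbergSwap P).summable_iff (f := g)).mpr hg
  have hinner : ∀ q : P × ℕ, ∑' k : ℕ, g (SelbergSwap P (q, k))
      = ((Real.log (N q.1) / (1 - (NE q)⁻¹) : ℝ) : ℂ) * ((NE q : ℝ) : ℂ) ^ (-s) := by
    intro q
    rw [hNE q]
    exact SelbergAux.inner_sum (hN q.1) (by linarith : 0 < s.re) q.2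
  calc deriv (fun w => ∏' q : P × ℕ, (1 - (N q.1 : ℂ) ^ (-w - (q.2:ℂ)))) s
      / (∏' q : P × ℕ, (1 - (N q.1 : ℂ) ^ (-s - (q.2:ℂ))))
      = deriv (fun w => ∑' q : P × ℕ,
          Complex.log (1 - (N q.1 : ℂ) ^ (-w - (q.2:ℂ)))) s := hmain
    _ = ∑' q : P × ℕ, deriv (fun w =>
          Complex.log (1 - (N q.1 : ℂ) ^ (-w - (q.2:ℂ)))) s := hGs.tsum_eq.symm
    _ = ∑' q : P × ℕ, ∑' m : ℕ, g (q, m) := by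
        refine tsum_congr fun q => ?_
        rw [(hFd q s hsU).deriv, hper q]
    _ = ∑' t : (P × ℕ) × ℕ, g t := (Summable.tsum_prod hg).symm
    _ = ∑' t : (P × ℕ) × ℕ, g (SelbergSwap P t) := (Equiv.tsum_eq (SelbergSwap P) g).symm
    _ = ∑' (q : P × ℕ), ∑' (k : ℕ), g (SelbergSwap P (q, k)) := Summable.tsum_prod hge
    _ = ∑' q : P × ℕ,
          ((Real.log (N q.1) / (1 - (NE q)⁻¹) : ℝ) : ℂ) * ((NE q : ℝ) : ℂ) ^ (-s) :=
        tsum_congr hinner
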